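/- With the setup of the two-soliton collision laws (ζ₁, ζ₂ distinct with positive imaginary parts, u₁, u₂ unit vectors in ℂ^m, φ₁₂ real defined by e^{-2φ₁₂} = |（ζ₁-ζ₂)/(ζ₁-ζ₂*)|²(1 + ((ζ₁-ζ₁*)(ζ₂-ζ₂*)/|ζ₁-ζ₂*|²)|⟨u₁,u₂⟩|²), and u_{{1},2} = e^{φ₁₂}((ζ₁*-ζ₂*)/(ζ₁-ζ₂*))(u₂ - ((ζ₁-ζ₁*)/(ζ₁-ζ₂*))⟨u₂,u₁⟩u₁), u_{{2},1} = e^{φ₁₂}((ζ₂*-ζ₁*)/(ζ₂-ζ₁*))(u₁ - ((ζ₂-ζ₂*)/(ζ₂-ζ₁*))⟨u₁,u₂⟩u₂)), the modulus of the Hermitian product is preserved: |⟨u₁, u₂⟩| = |⟨u_{{2},1}, u_{{1},2}⟩|. -/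

import Mathlib

open Complex Matrix BigOperators

noncomputable section

/-- Hermitian inner product on ℂ^m, linear in the first slot. -/
def herm {m : ℕ} (u v : Fin m → ℂ) : ℂ := ∑ a, u a * (starRingEnd ℂ) (v a)

lemma herm_conj {m : ℕ} (u v : Fin m → ℂ) : herm v u = (starRingEnd ℂ) (herm u v) := by
  unfold herm; rw [map_sum]
  exact Finset.sum_congr rfl fun a _ => by simp [mul_comm]

lemma herm_expand {m : ℕ} (sQ sP bc ac : ℂ) (u₁ u₂ : Fin m → ℂ) :
    herm (fun a => sQ * (u₁ a - bc * u₂ a)) (fun a => sP * (u₂ a - ac * u₁ a)) =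
      sQ * (starRingEnd ℂ) sP * (herm u₁ u₂ - (starRingEnd ℂ) ac * herm u₁ u₁
        - bc * herm u₂ u₂ + bc * (starRingEnd ℂ) ac * herm u₂ u₁) := by
  have h : ∀ a : Fin m, sQ * (u₁ a - bc * u₂ a) * (starRingEnd ℂ) (sP * (u₂ a - ac * u₁ a)) =
      sQ * (starRingEnd ℂ) sP * (u₁ a * (starRingEnd ℂ) (u₂ a))
      - sQ * (starRingEnd ℂ) sP * (starRingEnd ℂ) ac * (u₁ a * (starRingEnd ℂ) (u₁ a))
      - sQ * (starRingEnd ℂ) sP * bc * (u₂ a * (starRingEnd ℂ) (u₂ a))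
      + sQ * (starRingEnd ℂ) sP * bc * (starRingEnd ℂ) ac * (u₂ a * (starRingEnd ℂ) (u₁ a)) := by
    intro a; simp only [_root_.map_mul, _root_.map_sub]; ring
  simp only [herm, h, Finset.sum_add_distrib, Finset.sum_sub_distrib, ← Finset.mul_sum]
  ring

lemma herm_cs {m : ℕ} (u v : Fin m → ℂ) (hu : herm u u = 1) (hv : herm v v = 1) :
    ‖herm u v‖ ≤ 1 := by
  let U : EuclideanSpace ℂ (Fin m) := WithLp.toLp 2 u
  let V : EuclideanSpace ℂ (Fin m) := WithLp.toLp 2 v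
  have hinner : (inner ℂ V U : ℂ) = herm u v := by
    simp only [PiLp.inner_apply, RCLike.inner_apply, herm]
    exact Finset.sum_congr rfl fun a _ => by simp [U, V, mul_comm]
  have hnU : ‖U‖ = 1 := by
    have h := inner_self_eq_norm_sq_to_K (𝕜 := ℂ) U
    have h2 : (inner ℂ U U : ℂ) = herm u u := by
      simp only [PiLp.inner_apply, RCLike.inner_apply, herm]
      exact Finset.sum_congr rfl fun a _ => by simp [U, mul_comm]
    rw [h2, hu] at h
    have h3 : ‖U‖^2 = 1 := by
      have h4 : ((‖U‖^2 : ℝ) : ℂ) = 1 := by push_cast; exact h.symm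
      exact_mod_cast h4
    nlinarith [norm_nonneg U]
  have hnV : ‖V‖ = 1 := by
    have h := inner_self_eq_norm_sq_to_K (𝕜 := ℂ) V
    have h2 : (inner ℂ V V : ℂ) = herm v v := by
      simp only [PiLp.inner_apply, RCLike.inner_apply, herm]
      exact Finset.sum_congr rfl fun a _ => by simp [V, mul_comm]
    rw [h2, hv] at h
    have h3 : ‖V‖^2 = 1 := by
      have h4 : ((‖V‖^2 : ℝ) : ℂ) = 1 := by push_cast; exact h.symm
      exact_mod_cast h4
    nlinarith [norm_nonneg V]
  have := norm_inner_le_norm (𝕜 := ℂ) V U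
  rw [hinner, hnU, hnV] at this
  simpa using this

theorem stmt11 {m : ℕ} (ζ₁ ζ₂ : ℂ) (h1 : 0 < ζ₁.im) (h2 : 0 < ζ₂.im) (hne : ζ₁ ≠ ζ₂)
    (u₁ u₂ : Fin m → ℂ) (hu1 : herm u₁ u₁ = 1) (hu2 : herm u₂ u₂ = 1) :
    let eneg : ℝ := (‖(ζ₁ - ζ₂) / (ζ₁ - (starRingEnd ℂ) ζ₂)‖)^2 *
      (1 + ((ζ₁ - (starRingEnd ℂ) ζ₁) * (ζ₂ - (starRingEnd ℂ) ζ₂)).re /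
        (‖ζ₁ - (starRingEnd ℂ) ζ₂‖)^2 * (‖herm u₁ u₂‖)^2)
    let u12 : Fin m → ℂ := fun a =>
      (((Real.sqrt eneg)⁻¹ : ℝ) : ℂ) *
        (((starRingEnd ℂ) ζ₁ - (starRingEnd ℂ) ζ₂) / (ζ₁ - (starRingEnd ℂ) ζ₂)) *
        (u₂ a - (ζ₁ - (starRingEnd ℂ) ζ₁) / (ζ₁ - (starRingEnd ℂ) ζ₂) *
          herm u₂ u₁ * u₁ a)
    let u21 : Fin m → ℂ := fun a =>
      (((Real.sqrt eneg)⁻¹ : ℝ) : ℂ) *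
        (((starRingEnd ℂ) ζ₂ - (starRingEnd ℂ) ζ₁) / (ζ₂ - (starRingEnd ℂ) ζ₁)) *
        (u₁ a - (ζ₂ - (starRingEnd ℂ) ζ₂) / (ζ₂ - (starRingEnd ℂ) ζ₁) *
          herm u₁ u₂ * u₂ a)
    ‖herm u₁ u₂‖ = ‖herm u21 u12‖ := by
  intro eneg u12 u21
  set c : ℂ := herm u₁ u₂ with hc
  set A : ℝ := ‖ζ₁ - ζ₂‖ with hA
  set B : ℝ := ‖ζ₁ - (starRingEnd ℂ) ζ₂‖ with hB
  set N : ℝ := B^2 - 4*ζ₁.im*ζ₂.im*(‖c‖)^2 with hN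
  set s : ℝ := (Real.sqrt eneg)⁻¹ with hs
  -- basic nonvanishing
  have hB0 : ζ₁ - (starRingEnd ℂ) ζ₂ ≠ 0 := by
    intro h
    have := congrArg Complex.im h
    simp [Complex.sub_im, Complex.conj_im] at this
    linarith
  have hd0 : ζ₂ - (starRingEnd ℂ) ζ₁ ≠ 0 := by
    intro h
    have := congrArg Complex.im h
    simp [Complex.sub_im, Complex.conj_im] at this
    linarith
  have hd0' : (starRingEnd ℂ) ζ₁ - ζ₂ ≠ 0 := fun h => hd0 (by rw [← neg_sub]; simp [h])
  have hA0 : ζ₁ - ζ₂ ≠ 0 := sub_ne_zero.mpr hne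
  have hApos : 0 < A := norm_pos_iff.mpr hA0
  have hBpos : 0 < B := norm_pos_iff.mpr hB0
  -- real part identity
  have hre : ((ζ₁ - (starRingEnd ℂ) ζ₁) * (ζ₂ - (starRingEnd ℂ) ζ₂)).re
      = -(4*ζ₁.im*ζ₂.im) := by
    simp [Complex.mul_re, Complex.sub_re, Complex.sub_im, Complex.conj_re, Complex.conj_im]
    ring
  have hBA : B^2 = A^2 + 4*ζ₁.im*ζ₂.im := by
    rw [hA, hB, Complex.sq_norm, Complex.sq_norm]
    simp [Complex.normSq_apply, Complex.sub_re, Complex.sub_im, Complex.conj_re,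
      Complex.conj_im]
    ring
  have hcs : ‖c‖ ≤ 1 := herm_cs u₁ u₂ hu1 hu2
  have hNA : A^2 ≤ N := by
    have h3 : (‖c‖)^2 ≤ 1 := by nlinarith [norm_nonneg c]
    rw [hN, hBA]
    nlinarith [mul_pos h1 h2, h3]
  have hNpos : 0 < N := lt_of_lt_of_le (by positivity) hNA
  -- eneg in closed form
  have heneg : eneg = A^2 * N / B^4 := by
    show (‖(ζ₁ - ζ₂) / (ζ₁ - (starRingEnd ℂ) ζ₂)‖)^2 *
      (1 + ((ζ₁ - (starRingEnd ℂ) ζ₁) * (ζ₂ - (starRingEnd ℂ) ζ₂)).re /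
        (‖ζ₁ - (starRingEnd ℂ) ζ₂‖)^2 * (‖c‖)^2) = A^2 * N / B^4
    rw [norm_div, hre, ← hA, ← hB, hN]
    field_simp
    ring
  have hepos : 0 < eneg := by rw [heneg]; positivity
  have hs2 : s^2 * eneg = 1 := by
    have hsq : Real.sqrt eneg ^ 2 = eneg := Real.sq_sqrt hepos.le
    calc s^2 * eneg = (Real.sqrt eneg)⁻¹^2 * (Real.sqrt eneg)^2 := by rw [hs, hsq]
      _ = 1 := by
          rw [inv_pow]
          exact inv_mul_cancel₀ (pow_ne_zero 2 (Real.sqrt_ne_zero'.mpr hepos))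
  -- the key closed form for herm u21 u12
  have hE : herm u21 u12 =
      ((s:ℂ) * (((starRingEnd ℂ) ζ₂ - (starRingEnd ℂ) ζ₁) / (ζ₂ - (starRingEnd ℂ) ζ₁))) *
        (starRingEnd ℂ) ((s:ℂ) * (((starRingEnd ℂ) ζ₁ - (starRingEnd ℂ) ζ₂) / (ζ₁ - (starRingEnd ℂ) ζ₂))) *
        (herm u₁ u₂ - (starRingEnd ℂ) ((ζ₁ - (starRingEnd ℂ) ζ₁) / (ζ₁ - (starRingEnd ℂ) ζ₂) * herm u₂ u₁) * herm u₁ u₁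
          - ((ζ₂ - (starRingEnd ℂ) ζ₂) / (ζ₂ - (starRingEnd ℂ) ζ₁) * herm u₁ u₂) * herm u₂ u₂
          + ((ζ₂ - (starRingEnd ℂ) ζ₂) / (ζ₂ - (starRingEnd ℂ) ζ₁) * herm u₁ u₂) *
            (starRingEnd ℂ) ((ζ₁ - (starRingEnd ℂ) ζ₁) / (ζ₁ - (starRingEnd ℂ) ζ₂) * herm u₂ u₁) * herm u₂ u₁) :=
    herm_expand _ _ _ _ u₁ u₂
  rw [hu1, hu2, herm_conj u₁ u₂, ← hc] at hE
  -- cast identities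
  have hcA : ((A^2 : ℝ) : ℂ) = (ζ₁ - ζ₂) * ((starRingEnd ℂ) ζ₁ - (starRingEnd ℂ) ζ₂) := by
    rw [hA, ← Complex.normSq_eq_norm_sq, Complex.normSq_eq_conj_mul_self]
    simp [_root_.map_sub]; ring
  have hcB : ((B^2 : ℝ) : ℂ) = (ζ₁ - (starRingEnd ℂ) ζ₂) * ((starRingEnd ℂ) ζ₁ - ζ₂) := by
    rw [hB, ← Complex.normSq_eq_norm_sq, Complex.normSq_eq_conj_mul_self]
    simp [_root_.map_sub]; ring
  have hcy : ((4*ζ₁.im*ζ₂.im : ℝ) : ℂ) = -((ζ₁ - (starRingEnd ℂ) ζ₁) * (ζ₂ - (starRingEnd ℂ) ζ₂)) := by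
    rw [Complex.sub_conj, Complex.sub_conj]
    push_cast
    ring_nf
    rw [Complex.I_sq]
    ring
  have hcc : (((‖c‖)^2 : ℝ) : ℂ) = c * (starRingEnd ℂ) c := by
    rw [← Complex.normSq_eq_norm_sq, Complex.normSq_eq_conj_mul_self]; ring
  have hmain : herm u21 u12 = ((s^2 * A^2 * N : ℝ) : ℂ) * c / (ζ₂ - (starRingEnd ℂ) ζ₁)^4 := by
    have hNc : ((s^2*A^2*N : ℝ) : ℂ) = (↑s)^2 * ((A^2:ℝ):ℂ) *
        (((B^2:ℝ):ℂ) - ((4*ζ₁.im*ζ₂.im:ℝ):ℂ) * (((‖c‖)^2:ℝ):ℂ)) := by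
      push_cast [hN]; ring
    rw [hE, hNc, hcA, hcB, hcy, hcc]
    simp only [_root_.map_mul, map_div₀, _root_.map_sub, Complex.conj_conj, Complex.conj_ofReal]
    field_simp
    ring
  rw [hmain, norm_div, norm_mul, norm_pow, Complex.norm_real, Real.norm_eq_abs]
  have hdB : ‖ζ₂ - (starRingEnd ℂ) ζ₁‖ = B := by
    have h : ζ₂ - (starRingEnd ℂ) ζ₁ = -((starRingEnd ℂ) (ζ₁ - (starRingEnd ℂ) ζ₂)) := by
      simp only [_root_.map_sub, Complex.conj_conj]; ring
    rw [h, norm_neg, Complex.norm_conj, ← hB]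
  rw [hdB]
  have hr : 0 ≤ s^2 * A^2 * N := by positivity
  rw [_root_.abs_of_nonneg hr]
  rw [heneg] at hs2
  have hBne : B ≠ 0 := ne_of_gt hBpos
  rw [hN] at hs2
  field_simp at hs2 ⊢
  linear_combination (-‖c‖) * hs2

end
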